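/- If lim_{s→σ⁻}(σ−s)^γ h(s) = C > 0 with 1 ≤ γ < 2, then ∫₀^σ √(h(t)) dt < +∞, and the integral ∫₀^σ e^{−H(t)} / √(∫ₜ^σ e^{−2H(s)}ds) dt is finite, where H(s) = ∫₀ˢ h(t)dt. -/

import Mathlib

open Filter Topology MeasureTheory Set

theorem stmt8 (σ C γ : ℝ) (hσ : 0 < σ) (hC : 0 < C) (hγ1 : 1 ≤ γ) (hγ2 : γ < 2)
    (h : ℝ → ℝ) (hcont : ContinuousOn h (Set.Ico 0 σ))
    (hmono : MonotoneOn h (Set.Ico 0 σ)) (hnonneg : ∀ t ∈ Set.Ico 0 σ, 0 ≤ h t)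
    (hlim : Tendsto (fun s => (σ - s) ^ γ * h s) (𝓝[<] σ) (𝓝 C))
    (H : ℝ → ℝ) (hH : ∀ s, H s = ∫ t in (0:ℝ)..s, h t) :
    IntegrableOn (fun t => Real.sqrt (h t)) (Set.Ioo 0 σ) volume ∧
    IntegrableOn
      (fun t => Real.exp (-H t) / Real.sqrt (∫ s in t..σ, Real.exp (-2 * H s)))
      (Set.Ioo 0 σ) volume := by
  -- upper bound for h near σ
  obtain ⟨a, ha0, haσ, hup⟩ : ∃ a, 0 < a ∧ a < σ ∧
      ∀ s ∈ Set.Ico a σ, h s ≤ 2 * C * (σ - s) ^ (-γ) := by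
    have h2 : ∀ᶠ s in 𝓝[<] σ, (σ - s) ^ γ * h s < 2 * C :=
      hlim.eventually_lt_const (by linarith)
    rw [eventually_iff, mem_nhdsLT_iff_exists_Ioo_subset] at h2
    obtain ⟨l, hl⟩ := h2
    refine ⟨max ((l + σ) / 2) (σ / 2), lt_max_of_lt_right (by linarith),
      max_lt (by linarith [hl.1.out]) (by linarith), ?_⟩
    intro s hs
    have hls : s ∈ Set.Ioo l σ := ⟨lt_of_lt_of_le (by linarith [hl.1.out] : l < (l + σ) / 2)
      (le_trans (le_max_left _ _) hs.1), hs.2⟩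
    have hbd : (σ - s) ^ γ * h s < 2 * C := hl.2 hls
    have hpos : (0 : ℝ) < σ - s := by linarith [hs.2]
    have hppos : (0 : ℝ) < (σ - s) ^ γ := Real.rpow_pos_of_pos hpos γ
    rw [Real.rpow_neg hpos.le]
    rw [← div_eq_mul_inv, le_div_iff₀ hppos]
    nlinarith [hbd]
  -- basic interval integrability of h
  have hhint : ∀ x y : ℝ, 0 ≤ x → x ≤ y → y < σ → IntervalIntegrable h volume x y := by
    intro x y hx hxy hy
    exact (hcont.mono (fun u hu => ⟨le_trans hx hu.1, lt_of_le_of_lt hu.2 hy⟩ :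
        Set.Icc x y ⊆ Set.Ico 0 σ)).intervalIntegrable_of_Icc hxy
  have hHadd : ∀ x y : ℝ, 0 ≤ x → x ≤ y → y < σ → H y = H x + ∫ s in x..y, h s := by
    intro x y hx hxy hy
    rw [hH, hH, intervalIntegral.integral_add_adjacent_intervals (hhint 0 x le_rfl hx
      (lt_of_le_of_lt hxy hy)) (hhint x y hx hxy hy)]
  have hHmono : ∀ x y : ℝ, 0 ≤ x → x ≤ y → y < σ → H x ≤ H y := by
    intro x y hx hxy hy
    rw [hHadd x y hx hxy hy]
    have : 0 ≤ ∫ s in x..y, h s := by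
      apply intervalIntegral.integral_nonneg hxy
      intro u hu
      exact hnonneg u ⟨le_trans hx hu.1, lt_of_le_of_lt hu.2 hy⟩
    linarith
  have hH0 : ∀ x ∈ Set.Ico (0:ℝ) σ, 0 ≤ H x := by
    intro x hx
    have h0 : H 0 = 0 := by rw [hH]; simp
    have := hHmono 0 x le_rfl hx.1 hx.2
    linarith
  have hHcont : ContinuousOn H (Set.Ico 0 σ) := by
    intro t ht
    have hb1 : t < (t + σ) / 2 := by linarith [ht.2]
    have hb2 : (t + σ) / 2 < σ := by linarith [ht.2]
    have hb0 : (0:ℝ) ≤ (t + σ) / 2 := by linarith [ht.1]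
    have hint : IntegrableOn h (Set.uIcc 0 ((t + σ) / 2)) volume := by
      rw [Set.uIcc_of_le hb0]
      exact (hcont.mono (fun u hu => ⟨hu.1, lt_of_le_of_lt hu.2 hb2⟩)).integrableOn_Icc
    have hcp := intervalIntegral.continuousOn_primitive_interval (a := 0) (μ := volume) hint
    rw [Set.uIcc_of_le hb0] at hcp
    have hcpH : ContinuousOn H (Set.Icc 0 ((t + σ) / 2)) :=
      hcp.congr (fun x _ => hH x)
    refine (hcpH t ⟨ht.1, hb1.le⟩).mono_of_mem_nhdsWithin ?_
    refine Filter.mem_of_superset (inter_mem_nhdsWithin _ (Iio_mem_nhds hb1)) ?_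
    rintro x ⟨hx1, hx2⟩
    exact ⟨hx1.1, le_of_lt hx2⟩
  -- the function E = exp (-2 H)
  set E : ℝ → ℝ := fun s => Real.exp (-2 * H s) with hE
  have hEcont : ContinuousOn E (Set.Ico 0 σ) :=
    Real.continuous_exp.comp_continuousOn (continuousOn_const.mul hHcont)
  have hEint : ∀ t ∈ Set.Ico (0:ℝ) σ, IntegrableOn E (Set.Ioc t σ) volume := by
    intro t ht
    have hIoo : IntegrableOn E (Set.Ioo t σ) volume := by
      apply Integrable.mono' (g := fun _ => (1:ℝ))
        ((integrableOn_const_iff (C := (1:ℝ))).2 (Or.inr (by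
          rw [Real.volume_Ioo]; exact ENNReal.ofReal_lt_top)))
      · exact ((hEcont.mono (fun u hu => ⟨le_trans ht.1 hu.1.le, hu.2⟩)).aestronglyMeasurable
          measurableSet_Ioo)
      · rw [ae_restrict_iff' measurableSet_Ioo]
        filter_upwards with u hu
        rw [Real.norm_of_nonneg (Real.exp_pos _).le]
        rw [Real.exp_le_one_iff]
        have := hH0 u ⟨le_trans ht.1 hu.1.le, hu.2⟩
        linarith
    exact hIoo.congr_set_ae (MeasureTheory.Ioo_ae_eq_Ioc (μ := volume) (a := t) (b := σ)).symm
  have hEii : ∀ t ∈ Set.Ico (0:ℝ) σ, IntervalIntegrable E volume t σ := fun t ht =>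
    (intervalIntegrable_iff_integrableOn_Ioc_of_le ht.2.le).2 (hEint t ht)
  -- G and its properties
  set G : ℝ → ℝ := fun t => ∫ s in t..σ, E s with hG
  have hGpos : ∀ t ∈ Set.Ico (0:ℝ) σ, 0 < G t := fun t ht =>
    intervalIntegral.intervalIntegral_pos_of_pos_on (hEii t ht)
      (fun x _ => Real.exp_pos _) ht.2
  have hGcont : ContinuousOn G (Set.Ico 0 σ) := by
    have hIcc : IntegrableOn E (Set.uIcc 0 σ) volume := by
      rw [Set.uIcc_of_le hσ.le]
      exact (hEint 0 ⟨le_rfl, hσ⟩).congr_set_ae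
        (MeasureTheory.Ioc_ae_eq_Icc (μ := volume) (a := (0:ℝ)) (b := σ)).symm
    have := intervalIntegral.continuousOn_primitive_interval_left (b := σ) (μ := volume) hIcc
    rw [Set.uIcc_of_le hσ.le] at this
    exact this.mono Set.Ico_subset_Icc_self
  -- the model integrable function (σ - t) ^ (-γ/2) on (a, σ)
  have hmodel : IntegrableOn (fun t => (σ - t) ^ (-γ / 2)) (Set.Ioo a σ) volume := by
    have h1 : IntervalIntegrable (fun x : ℝ => x ^ (-γ / 2)) volume 0 (σ - a) :=
      intervalIntegral.intervalIntegrable_rpow' (by linarith)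
    have h2 := (h1.comp_sub_left σ).symm
    simp only [sub_zero, sub_sub_cancel] at h2
    exact ((intervalIntegrable_iff_integrableOn_Ioc_of_le haσ.le).1 h2).mono_set
      Set.Ioo_subset_Ioc_self
  have hsplit : Set.Ioo (0:ℝ) σ ⊆ Set.Icc 0 a ∪ Set.Ioo a σ := by
    intro x hx
    rcases le_or_gt x a with hxa | hxa
    · exact Or.inl ⟨hx.1.le, hxa⟩
    · exact Or.inr ⟨hxa, hx.2⟩
  -- Part 1
  have part1 : IntegrableOn (fun t => Real.sqrt (h t)) (Set.Ioo 0 σ) volume := by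
    have hsc : ContinuousOn (fun t => Real.sqrt (h t)) (Set.Ico 0 σ) :=
      Real.continuous_sqrt.comp_continuousOn hcont
    have hIcc : IntegrableOn (fun t => Real.sqrt (h t)) (Set.Icc 0 a) volume :=
      (hsc.mono (fun u hu => ⟨hu.1, lt_of_le_of_lt hu.2 haσ⟩)).integrableOn_Icc
    have hIoo : IntegrableOn (fun t => Real.sqrt (h t)) (Set.Ioo a σ) volume := by
      apply Integrable.mono' (hmodel.const_mul (Real.sqrt (2 * C)))
      · exact (hsc.mono (fun u hu => ⟨le_trans ha0.le hu.1.le, hu.2⟩)).aestronglyMeasurable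
          measurableSet_Ioo
      · rw [ae_restrict_iff' measurableSet_Ioo]
        filter_upwards with t ht
        rw [Real.norm_of_nonneg (Real.sqrt_nonneg _)]
        have hpos : (0:ℝ) < σ - t := by linarith [ht.2]
        calc Real.sqrt (h t) ≤ Real.sqrt (2 * C * (σ - t) ^ (-γ)) :=
              Real.sqrt_le_sqrt (hup t ⟨ht.1.le, ht.2⟩)
          _ = Real.sqrt (2 * C) * (σ - t) ^ (-γ / 2) := by
              rw [Real.sqrt_mul (by linarith : (0:ℝ) ≤ 2 * C),
                Real.sqrt_eq_rpow ((σ - t) ^ (-γ)), ← Real.rpow_mul hpos.le]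
              ring_nf
    exact ((hIcc.union hIoo).mono_set hsplit)
  -- the constant c
  set c : ℝ := min (1 / (2 * (σ + 1))) (1 / (8 * C)) with hc
  have hc0 : 0 < c := lt_min (by positivity) (by positivity)
  -- the key pointwise bound near σ
  have key : ∀ t ∈ Set.Ioo a σ, Real.exp (-H t) / Real.sqrt (G t)
      ≤ (Real.exp 1 / Real.sqrt c) * (σ - t) ^ (-γ / 2) := by
    intro t ht
    have ht0 : 0 < t := lt_trans ha0 ht.1
    have hd : 0 < σ - t := by linarith [ht.2]
    set d : ℝ := σ - t with hdd
    set δ : ℝ := c * d ^ γ with hδ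
    have hdγ : 0 < d ^ γ := Real.rpow_pos_of_pos hd γ
    have hδ0 : 0 < δ := mul_pos hc0 hdγ
    have hd1 : d ^ (γ - 1) ≤ σ + 1 := by
      rcases le_or_gt d 1 with h1 | h1
      · exact le_trans (Real.rpow_le_one hd.le h1 (by linarith)) (by linarith)
      · calc d ^ (γ - 1) ≤ d ^ (1 : ℝ) :=
              Real.rpow_le_rpow_of_exponent_le h1.le (by linarith)
          _ = d := Real.rpow_one d
          _ ≤ σ + 1 := by rw [hdd]; linarith [ht.1, ha0]
    have hdsplit : d ^ γ = d ^ (γ - 1) * d := by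
      have hq := Real.rpow_add hd (γ - 1) 1
      rw [Real.rpow_one] at hq
      nth_rewrite 1 [show γ = γ - 1 + 1 by ring]
      exact hq
    have hδd : δ ≤ d / 2 := by
      have h1 : δ ≤ 1 / (2 * (σ + 1)) * (d ^ (γ - 1) * d) := by
        rw [hδ, hdsplit]
        exact mul_le_mul_of_nonneg_right (min_le_left _ _) (by positivity)
      have h2 : 1 / (2 * (σ + 1)) * (d ^ (γ - 1) * d) ≤ 1 / (2 * (σ + 1)) * ((σ + 1) * d) :=
        mul_le_mul_of_nonneg_left (mul_le_mul_of_nonneg_right hd1 hd.le) (by positivity)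
      have h3 : 1 / (2 * (σ + 1)) * ((σ + 1) * d) = d / 2 := by
        field_simp
      linarith
    have ht2 : t + δ < σ := by
      have : d = σ - t := hdd
      linarith
    have hmem : t + δ ∈ Set.Ico a σ := ⟨by linarith [ht.1], ht2⟩
    -- step bound on H
    have hint1 : ∫ s in t..(t + δ), h s ≤ δ * h (t + δ) := by
      have hle : ∫ s in t..(t + δ), h s ≤ ∫ _ in t..(t + δ), h (t + δ) :=
        intervalIntegral.integral_mono_on (by linarith)
          (hhint t (t + δ) ht0.le (by linarith) ht2) intervalIntegrable_const
          (fun x hx => hmono ⟨le_trans ht0.le hx.1, lt_of_le_of_lt hx.2 ht2⟩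
            ⟨by linarith [ht0, hδ0], ht2⟩ hx.2)
      rw [intervalIntegral.integral_const, smul_eq_mul] at hle
      have heq : t + δ - t = δ := by ring
      rw [heq] at hle
      exact hle
    have hdneg : (0:ℝ) ≤ d ^ (-γ) := (Real.rpow_pos_of_pos hd _).le
    have hh2 : h (t + δ) ≤ 8 * C * d ^ (-γ) := by
      have h1 := hup (t + δ) hmem
      have h2 : d / 2 ≤ σ - (t + δ) := by
        have : d = σ - t := hdd
        linarith
      have h3 : (σ - (t + δ)) ^ (-γ) ≤ (d / 2) ^ (-γ) :=
        Real.rpow_le_rpow_of_nonpos (by positivity) h2 (by linarith)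
      have h4 : (d / 2) ^ (-γ) = d ^ (-γ) * 2 ^ γ := by
        rw [Real.div_rpow hd.le (by norm_num : (0:ℝ) ≤ 2),
          Real.rpow_neg (by norm_num : (0:ℝ) ≤ 2), div_eq_mul_inv, inv_inv]
      have h5 : (2:ℝ) ^ γ ≤ 4 := by
        calc (2:ℝ) ^ γ ≤ (2:ℝ) ^ (2:ℝ) := Real.rpow_le_rpow_of_exponent_le one_le_two hγ2.le
          _ = 4 := by
            rw [show ((2:ℝ):ℝ) = ((2:ℕ):ℝ) by norm_num, Real.rpow_natCast]; norm_num
      calc h (t + δ) ≤ 2 * C * (σ - (t + δ)) ^ (-γ) := h1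
        _ ≤ 2 * C * (d / 2) ^ (-γ) := mul_le_mul_of_nonneg_left h3 (by positivity)
        _ = 2 * C * (d ^ (-γ) * 2 ^ γ) := by rw [h4]
        _ ≤ 2 * C * (d ^ (-γ) * 4) :=
            mul_le_mul_of_nonneg_left (mul_le_mul_of_nonneg_left h5 hdneg) (by positivity)
        _ = 8 * C * d ^ (-γ) := by ring
    have hcancel : d ^ γ * d ^ (-γ) = 1 := by
      rw [← Real.rpow_add hd]; simp
    have hstep2 : δ * h (t + δ) ≤ 1 := by
      have hub : δ * h (t + δ) ≤ δ * (8 * C * d ^ (-γ)) :=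
        mul_le_mul_of_nonneg_left hh2 hδ0.le
      have heq : δ * (8 * C * d ^ (-γ)) = 8 * C * c := by
        rw [hδ]; linear_combination 8 * C * c * hcancel
      have hc8 : 8 * C * c ≤ 1 := by
        have hle := min_le_right (1 / (2 * (σ + 1))) (1 / (8 * C))
        rw [← hc] at hle
        calc 8 * C * c ≤ 8 * C * (1 / (8 * C)) :=
              mul_le_mul_of_nonneg_left hle (by positivity)
          _ = 1 := by field_simp
      linarith [heq ▸ hub]
    have hHstep : H (t + δ) ≤ H t + 1 := by
      rw [hHadd t (t + δ) ht0.le (by linarith) ht2]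
      linarith
    -- lower bound for G t
    have hEi : IntegrableOn E (Set.Ioc t σ) volume := hEint t ⟨ht0.le, ht.2⟩
    have h1 : ∫ s in Set.Ioc t (t + δ), E s ≤ ∫ s in Set.Ioc t σ, E s :=
      setIntegral_mono_set hEi (Filter.Eventually.of_forall (fun x => (Real.exp_pos _).le))
        ((Set.Ioc_subset_Ioc_right ht2.le).eventuallyLE)
    have h2 : Real.exp (-2 * (H t + 1)) * (volume (Set.Ioc t (t + δ))).toReal
        ≤ ∫ s in Set.Ioc t (t + δ), E s := by
      apply setIntegral_ge_of_const_le_real measurableSet_Ioc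
        (by rw [Real.volume_Ioc]; exact ENNReal.ofReal_ne_top)
      · intro x hx
        have hx0 : 0 ≤ x := le_trans ht0.le hx.1.le
        have hxH : H x ≤ H t + 1 := le_trans (hHmono x (t + δ) hx0 hx.2 ht2) hHstep
        exact Real.exp_le_exp.2 (by linarith)
      · exact hEi.mono_set (Set.Ioc_subset_Ioc_right ht2.le)
    have hvol : (volume (Set.Ioc t (t + δ))).toReal = δ := by
      rw [Real.volume_Ioc, ENNReal.toReal_ofReal (by linarith)]; ring
    rw [hvol] at h2
    have hGeq : G t = ∫ s in Set.Ioc t σ, E s := intervalIntegral.integral_of_le ht.2.le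
    have hGlow : Real.exp (-2 * (H t + 1)) * δ ≤ G t := by rw [hGeq]; linarith
    have hsq : Real.exp (-(H t + 1)) * Real.sqrt δ ≤ Real.sqrt (G t) := by
      have hs1 : Real.sqrt (Real.exp (-2 * (H t + 1)) * δ) ≤ Real.sqrt (G t) :=
        Real.sqrt_le_sqrt hGlow
      have hs2 : Real.sqrt (Real.exp (-2 * (H t + 1)) * δ)
          = Real.exp (-(H t + 1)) * Real.sqrt δ := by
        rw [Real.sqrt_mul (Real.exp_pos _).le, ← Real.exp_half,
          show -2 * (H t + 1) / 2 = -(H t + 1) by ring]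
      linarith [hs2 ▸ hs1]
    have hden : 0 < Real.exp (-(H t + 1)) * Real.sqrt δ := by positivity
    calc Real.exp (-H t) / Real.sqrt (G t)
        ≤ Real.exp (-H t) / (Real.exp (-(H t + 1)) * Real.sqrt δ) :=
          div_le_div_of_nonneg_left (Real.exp_pos _).le hden hsq
      _ = (Real.exp 1 / Real.sqrt c) * d ^ (-γ / 2) := by
          rw [div_mul_eq_div_div, ← Real.exp_sub,
            show -H t - -(H t + 1) = 1 by ring, hδ,
            Real.sqrt_mul hc0.le, Real.sqrt_eq_rpow (d ^ γ), ← Real.rpow_mul hd.le,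
            div_mul_eq_div_div, show γ * (1 / 2) = γ / 2 by ring,
            show -γ / 2 = -(γ / 2) by ring, Real.rpow_neg hd.le, div_eq_mul_inv]
  -- Part 2
  have part2 : IntegrableOn (fun t => Real.exp (-H t) / Real.sqrt (G t))
      (Set.Ioo 0 σ) volume := by
    have hf2c : ContinuousOn (fun t => Real.exp (-H t) / Real.sqrt (G t)) (Set.Ico 0 σ) := by
      apply ContinuousOn.div
      · exact Real.continuous_exp.comp_continuousOn hHcont.neg
      · exact Real.continuous_sqrt.comp_continuousOn hGcont
      · intro x hx; exact (Real.sqrt_pos.2 (hGpos x hx)).ne'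
    have hIcc : IntegrableOn (fun t => Real.exp (-H t) / Real.sqrt (G t))
        (Set.Icc 0 a) volume :=
      (hf2c.mono (fun u hu => ⟨hu.1, lt_of_le_of_lt hu.2 haσ⟩)).integrableOn_Icc
    have hIoo : IntegrableOn (fun t => Real.exp (-H t) / Real.sqrt (G t))
        (Set.Ioo a σ) volume := by
      apply Integrable.mono' (hmodel.const_mul (Real.exp 1 / Real.sqrt c))
      · exact (hf2c.mono (fun u hu => ⟨le_trans ha0.le hu.1.le, hu.2⟩)).aestronglyMeasurable
          measurableSet_Ioo
      · rw [ae_restrict_iff' measurableSet_Ioo]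
        filter_upwards with t ht
        rw [Real.norm_of_nonneg (by positivity)]
        exact key t ht
    exact (hIcc.union hIoo).mono_set hsplit
  exact ⟨part1, part2⟩
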